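/- Let a_1, …, a_N ∈ ℤ^n be vectors that span ℚ^n over ℚ and such that there exists v ∈ ℚ^n with ⟨v, a_j⟩ = 1 for all j (homogeneity), with N > n. Let w = (w_1, …, w_N) ∈ ℝ^N. Suppose there exist indices 1 ≤ i_1 < … < i_{N−n−1} ≤ N and nonnegative real numbers λ_1, …, λ_{N−n−1} such that for every u = (u_1, …, u_N) ∈ ℝ^N with u_1 a_1 + … + u_N a_N = 0 one has w_1 u_1 + … + w_N u_N = λ_1 u_{i_1} + … + λ_{N−n−1} u_{i_{N−n−1}}. Then S(w) is not a regular triangulation, i.e., some element of S(w) that is maximal with respect to inclusion fails to be a simplex. -/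
import Mathlib


open scoped BigOperators

/-- Membership of a subset `σ` in the regular subdivision `S(w)` of the point
configuration `a : ι → (Fin n → ℝ)` with weight vector `w`. -/
def memSubdiv {ι : Type*} {n : ℕ} (a : ι → Fin n → ℝ) (w : ι → ℝ) (σ : Finset ι) : Prop :=
  ∃ m : Fin n → ℝ,
    (∀ i ∈ σ, ∑ k, m k * a i k = w i) ∧ ∀ j, j ∉ σ → ∑ k, m k * a j k < w j

/-- A linear functional vanishing on the kernel of `u ↦ ∑ j, u j • a j` is given by
pairing with some `m` against the `a j`. -/
lemma exists_row_combination {N n : ℕ} (a : Fin N → Fin n → ℝ) (c : Fin N → ℝ)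
    (h : ∀ u : Fin N → ℝ, (∀ i : Fin n, ∑ j, u j * a j i = 0) → ∑ j, c j * u j = 0) :
    ∃ m : Fin n → ℝ, ∀ j, ∑ i, m i * a j i = c j := by
  classical
  let M : (Fin N → ℝ) →ₗ[ℝ] (Fin n → ℝ) :=
    { toFun := fun u => fun i => ∑ j, u j * a j i
      map_add' := by
        intro x y; funext i; simp [add_mul, Finset.sum_add_distrib]
      map_smul' := by
        intro r x; funext i; simp [Finset.mul_sum, mul_assoc] }
  let φ : (Fin N → ℝ) →ₗ[ℝ] ℝ :=
    { toFun := fun u => ∑ j, c j * u j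
      map_add' := by
        intro x y; simp [mul_add, Finset.sum_add_distrib]
      map_smul' := by
        intro r x; simp [Finset.mul_sum, mul_left_comm] }
  have hker : LinearMap.ker M ≤ LinearMap.ker φ := by
    intro u hu
    have hu' : ∀ i : Fin n, ∑ j, u j * a j i = 0 := by
      intro i
      have := congrFun (LinearMap.mem_ker.mp hu) i
      simpa [M] using this
    simpa [φ] using h u hu'
  have hφ : φ ∈ (LinearMap.ker M).dualAnnihilator := by
    rw [Submodule.mem_dualAnnihilator]
    intro u hu
    exact LinearMap.mem_ker.mp (hker hu)
  rw [← LinearMap.range_dualMap_eq_dualAnnihilator_ker] at hφ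
  obtain ⟨ψ, hψ⟩ := hφ
  refine ⟨fun i => ψ (Pi.single i 1), fun j => ?_⟩
  have h1 : φ (Pi.single j 1) = c j := by
    simp [φ, Pi.single_apply, Finset.sum_ite_eq]
  have h2 : M (Pi.single j 1) = fun i => a j i := by
    funext i
    simp [M, Pi.single_apply, ite_mul, Finset.sum_ite_eq]
  have h3 : (fun i => a j i) = ∑ i, a j i • (Pi.single i 1 : Fin n → ℝ) := by
    funext x
    simp [Pi.single_apply, Finset.sum_ite_eq]
  have h4 : ψ (M (Pi.single j 1)) = φ (Pi.single j 1) := by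
    rw [← hψ]; rfl
  rw [h2, h3] at h4
  rw [map_sum] at h4
  simp only [map_smul, smul_eq_mul] at h4
  rw [← h1, ← h4]
  exact Finset.sum_congr rfl fun i _ => mul_comm _ _

/-- If the weight vector `w` lies (modulo the row span) in a cone spanned by `N - n - 1`
of the Gale dual vectors, then the regular subdivision `S(w)` is not a regular
triangulation: some maximal element of `S(w)` fails to be a simplex. -/
theorem stmt1 {N n : ℕ} (hNn : n < N) (a : Fin N → Fin n → ℤ)
    (hspan : Submodule.span ℚ (Set.range (fun j => fun i => (a j i : ℚ))) = ⊤)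
    (hhom : ∃ v : Fin n → ℚ, ∀ j, ∑ i, v i * (a j i : ℚ) = 1)
    (w : Fin N → ℝ)
    (ι : Fin (N - n - 1) → Fin N) (hι : StrictMono ι)
    (lam : Fin (N - n - 1) → ℝ) (hlam : ∀ k, 0 ≤ lam k)
    (hw : ∀ u : Fin N → ℝ, (∀ i : Fin n, ∑ j, u j * (a j i : ℝ) = 0) →
      ∑ j, w j * u j = ∑ k, lam k * u (ι k)) :
    ∃ σ : Finset (Fin N),
      memSubdiv (fun j i => (a j i : ℝ)) w σ ∧
      (∀ τ : Finset (Fin N), memSubdiv (fun j i => (a j i : ℝ)) w τ → σ ⊆ τ → σ = τ) ∧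
      ¬ (σ.card = n ∧ LinearIndependent ℝ (fun i : σ => fun k => (a i k : ℝ))) := by
  classical
  set A : Fin N → Fin n → ℝ := fun j i => (a j i : ℝ) with hA
  -- extend lam to a vector on Fin N supported on the range of ι
  set lamext : Fin N → ℝ := fun j => ∑ k, if ι k = j then lam k else 0 with hlamext
  have hlamext_sum : ∀ u : Fin N → ℝ, ∑ j, lamext j * u j = ∑ k, lam k * u (ι k) := by
    intro u
    simp only [hlamext, Finset.sum_mul, ite_mul, zero_mul]
    rw [Finset.sum_comm]
    simp [Finset.sum_ite_eq]
  have hlamext_nonneg : ∀ j, 0 ≤ lamext j := by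
    intro j
    apply Finset.sum_nonneg
    intro k _
    split <;> [exact hlam k; exact le_rfl]
  -- find m with ∑ i, m i * a j i = w j - lamext j
  obtain ⟨m, hm⟩ := exists_row_combination A (fun j => w j - lamext j) (by
    intro u hu
    have := hw u hu
    simp only [sub_mul, Finset.sum_sub_distrib]
    rw [this, hlamext_sum u]
    ring)
  -- the cell σ0
  set σ0 : Finset (Fin N) := Finset.univ.filter (fun j => lamext j = 0) with hσ0
  have hmem0 : memSubdiv A w σ0 := by
    refine ⟨m, fun j hj => ?_, fun j hj => ?_⟩
    · have : lamext j = 0 := (Finset.mem_filter.mp hj).2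
      rw [hm j, this, sub_zero]
    · have h0 : lamext j ≠ 0 := by
        intro h; exact hj (Finset.mem_filter.mpr ⟨Finset.mem_univ j, h⟩)
      have : 0 < lamext j := lt_of_le_of_ne (hlamext_nonneg j) (Ne.symm h0)
      rw [hm j]
      linarith
  -- cardinality bound: σ0 has at least n+1 elements
  have hcard0 : n + 1 ≤ σ0.card := by
    have hsub : Finset.univ.filter (fun j => ¬ lamext j = 0) ⊆ Finset.univ.image ι := by
      intro j hj
      have h0 : lamext j ≠ 0 := (Finset.mem_filter.mp hj).2
      have : ∃ k, ι k = j := by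
        by_contra hc
        push_neg at hc
        apply h0
        simp only [hlamext]
        exact Finset.sum_eq_zero fun k _ => by simp [hc k]
      obtain ⟨k, hk⟩ := this
      exact Finset.mem_image.mpr ⟨k, Finset.mem_univ k, hk⟩
    have h1 : (Finset.univ.filter (fun j => ¬ lamext j = 0)).card ≤ N - n - 1 := by
      calc (Finset.univ.filter (fun j => ¬ lamext j = 0)).card
          ≤ (Finset.univ.image ι).card := Finset.card_le_card hsub
        _ ≤ (Finset.univ : Finset (Fin (N - n - 1))).card := Finset.card_image_le
        _ = N - n - 1 := by simp
    have h2 : σ0.card + (Finset.univ.filter (fun j => ¬ lamext j = 0)).card = N := by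
      rw [hσ0, Finset.card_filter_add_card_filter_not]
      simp
    omega
  -- pick a maximal member of S(w) containing σ0
  set 𝒮 : Finset (Finset (Fin N)) :=
    Finset.univ.filter (fun τ => memSubdiv A w τ ∧ σ0 ⊆ τ) with h𝒮
  have h𝒮ne : 𝒮.Nonempty :=
    ⟨σ0, Finset.mem_filter.mpr ⟨Finset.mem_univ _, hmem0, Finset.Subset.refl _⟩⟩
  obtain ⟨τ, hτ𝒮, hτmax⟩ := Finset.exists_max_image 𝒮 Finset.card h𝒮ne
  obtain ⟨-, hτmem, hστ⟩ := Finset.mem_filter.mp hτ𝒮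
  refine ⟨τ, hτmem, ?_, ?_⟩
  · intro τ' hτ' hsub
    have hτ'𝒮 : τ' ∈ 𝒮 :=
      Finset.mem_filter.mpr ⟨Finset.mem_univ _, hτ', hστ.trans hsub⟩
    exact Finset.eq_of_subset_of_card_le hsub (hτmax τ' hτ'𝒮)
  · rintro ⟨hcard, -⟩
    have := Finset.card_le_card hστ
    omega
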